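/- arXiv:2506.14515 — 2 statements merged into one kernel-verified Lean document; each statement's English description precedes it below -/
import Mathlib

section
/- If f : ℝⁿ → ℝᵐ is L_f-Lipschitz in its parameters, i.e. ‖f(θ, x) − f(θ', x)‖ ≤ L_f‖θ − θ'‖ for all x, then for the FAMR solution θ* = θ₀ − (H+λI)⁻¹g and retrained solution w* = θ₀ − H⁻¹g, we have sup over x of ‖f(θ*, x) − f(w*, x)‖ ≤ L_f · λ‖g‖ / λ_min(H)². -/
open scoped RealInnerProductSpace

lemma smul_one_posDef {n : ℕ} {lam : ℝ} (hlam : 0 < lam) :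
    (lam • (1 : Matrix (Fin n) (Fin n) ℝ)).PosDef := by
  refine ⟨?_, fun x hx => ?_⟩
  · unfold Matrix.IsHermitian
    simp [Matrix.conjTranspose_smul, Matrix.IsHermitian]
  · exact ((Matrix.PosDef.one (n := Fin n) (R := ℝ)).smul hlam).2 hx

lemma inv_mulVec_norm_le {n : ℕ} (M : Matrix (Fin n) (Fin n) ℝ) (hM : IsUnit M.det)
    (μ : ℝ) (hμ : 0 < μ)
    (h : ∀ v : EuclideanSpace ℝ (Fin n), μ * ‖v‖ ^ 2 ≤ ⟪v, (WithLp.equiv 2 (Fin n → ℝ)).symm (M.mulVec v)⟫)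
    (w : EuclideanSpace ℝ (Fin n)) :
    ‖((WithLp.equiv 2 (Fin n → ℝ)).symm (M⁻¹.mulVec w) : EuclideanSpace ℝ (Fin n))‖ ≤ ‖w‖ / μ := by
  set v : EuclideanSpace ℝ (Fin n) := (WithLp.equiv 2 (Fin n → ℝ)).symm (M⁻¹.mulVec w)
  have hMv : M.mulVec v = w := by
    show M.mulVec (M⁻¹.mulVec w) = w
    rw [Matrix.mulVec_mulVec, Matrix.mul_nonsing_inv _ hM, Matrix.one_mulVec]
  have h1 : μ * ‖v‖ ^ 2 ≤ ‖v‖ * ‖w‖ := by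
    calc μ * ‖v‖ ^ 2 ≤ ⟪v, (WithLp.equiv 2 (Fin n → ℝ)).symm (M.mulVec v)⟫ := h v
    _ = ⟪v, w⟫ := by
      show _ = ⟪v, (WithLp.equiv 2 (Fin n → ℝ)).symm (w : Fin n → ℝ)⟫
      rw [hMv]
    _ ≤ ‖v‖ * ‖w‖ := real_inner_le_norm v w
  rcases eq_or_lt_of_le (norm_nonneg v) with h0 | h0
  · rw [← h0]; positivity
  · rw [le_div_iff₀ hμ]
    have := mul_le_mul_of_nonneg_left h1 (le_of_lt (inv_pos.mpr h0))
    calc ‖v‖ * μ = ‖v‖⁻¹ * (μ * ‖v‖ ^ 2) := by field_simp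
    _ ≤ ‖v‖⁻¹ * (‖v‖ * ‖w‖) := by
        exact mul_le_mul_of_nonneg_left h1 (le_of_lt (inv_pos.mpr h0))
    _ = ‖w‖ := by field_simp

/-- If f(·,x) is L_f-Lipschitz in the parameters uniformly in x, then for the
FAMR solution θ* = θ₀ − (H+λI)⁻¹g and retrained solution w* = θ₀ − H⁻¹g,
sup_x ‖f(θ*,x) − f(w*,x)‖ ≤ L_f · λ‖g‖/λ_min(H)². -/
theorem famr_output_divergence_bound
    {n m : ℕ} {X : Type*}
    (f : EuclideanSpace ℝ (Fin n) → X → EuclideanSpace ℝ (Fin m))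
    (Lf : ℝ) (hLf : 0 ≤ Lf)
    (hlip : ∀ (x : X) (θ θ' : EuclideanSpace ℝ (Fin n)),
      ‖f θ x - f θ' x‖ ≤ Lf * ‖θ - θ'‖)
    (H : Matrix (Fin n) (Fin n) ℝ) (hH : H.PosDef)
    (μ : ℝ) (hμ : 0 < μ)
    (hmin : ∀ v : EuclideanSpace ℝ (Fin n), μ * ‖v‖ ^ 2 ≤ ⟪v, (WithLp.equiv 2 (Fin n → ℝ)).symm (H.mulVec v)⟫)
    (g θ₀ ws θs : EuclideanSpace ℝ (Fin n)) (lam : ℝ) (hlam : 0 < lam)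
    (hws : ws = θ₀ - (WithLp.equiv 2 (Fin n → ℝ)).symm (H⁻¹.mulVec g))
    (hθs : θs = θ₀ - (WithLp.equiv 2 (Fin n → ℝ)).symm ((H + lam • (1 : Matrix (Fin n) (Fin n) ℝ))⁻¹.mulVec g)) :
    ∀ x : X, ‖f θs x - f ws x‖ ≤ Lf * (lam * ‖g‖ / μ ^ 2) := by
  intro x
  set B := H + lam • (1 : Matrix (Fin n) (Fin n) ℝ) with hB
  have hBpd : B.PosDef := hH.add (smul_one_posDef hlam)
  have hHu : IsUnit H.det := hH.det_pos.ne'.isUnit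
  have hBu : IsUnit B.det := hBpd.det_pos.ne'.isUnit
  have hBmin : ∀ v : EuclideanSpace ℝ (Fin n), μ * ‖v‖ ^ 2 ≤ ⟪v, (WithLp.equiv 2 (Fin n → ℝ)).symm (B.mulVec v)⟫ := by
    intro v
    have hvec : ((WithLp.equiv 2 (Fin n → ℝ)).symm (B.mulVec v) : EuclideanSpace ℝ (Fin n))
        = (WithLp.equiv 2 (Fin n → ℝ)).symm (H.mulVec v) + lam • v := by
      show (WithLp.equiv 2 (Fin n → ℝ)).symm (B.mulVec v) = _
      rw [hB, Matrix.add_mulVec, Matrix.smul_mulVec, Matrix.one_mulVec]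
      rfl
    have h2 : ⟪v, (WithLp.equiv 2 (Fin n → ℝ)).symm (B.mulVec v)⟫
        = ⟪v, (WithLp.equiv 2 (Fin n → ℝ)).symm (H.mulVec v)⟫ + lam * ⟪v, v⟫ := by
      show ⟪v, ((WithLp.equiv 2 (Fin n → ℝ)).symm (B.mulVec v) : EuclideanSpace ℝ (Fin n))⟫ = _
      rw [hvec, inner_add_right, real_inner_smul_right]
    rw [h2]
    have : (0:ℝ) ≤ lam * ⟪v, v⟫ := mul_nonneg hlam.le real_inner_self_nonneg
    linarith [hmin v]
  have hmat : H⁻¹ - B⁻¹ = lam • (H⁻¹ * B⁻¹) := by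
    have key : H⁻¹ * B * B⁻¹ - H⁻¹ * H * B⁻¹ = H⁻¹ - B⁻¹ := by
      rw [Matrix.mul_assoc, Matrix.mul_nonsing_inv _ hBu, Matrix.mul_one,
        Matrix.nonsing_inv_mul _ hHu, Matrix.one_mul]
    have expand : H⁻¹ * B = H⁻¹ * H + lam • (H⁻¹) := by
      rw [hB, Matrix.mul_add, Matrix.mul_smul, Matrix.mul_one]
    calc H⁻¹ - B⁻¹ = H⁻¹ * B * B⁻¹ - H⁻¹ * H * B⁻¹ := key.symm
      _ = (H⁻¹ * H + lam • H⁻¹) * B⁻¹ - H⁻¹ * H * B⁻¹ := by rw [expand]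
      _ = lam • (H⁻¹ * B⁻¹) := by
          rw [Matrix.add_mul, Matrix.smul_mul]; abel
  have hdiff : θs - ws = (WithLp.equiv 2 (Fin n → ℝ)).symm
      (lam • (H⁻¹.mulVec (B⁻¹.mulVec g))) := by
    rw [hθs, hws]
    have e2 : ((WithLp.equiv 2 (Fin n → ℝ)).symm ((H⁻¹ - B⁻¹).mulVec g) : EuclideanSpace ℝ (Fin n))
        = (WithLp.equiv 2 (Fin n → ℝ)).symm (H⁻¹.mulVec g)
          - (WithLp.equiv 2 (Fin n → ℝ)).symm (B⁻¹.mulVec g) := by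
      show (WithLp.equiv 2 (Fin n → ℝ)).symm ((H⁻¹ - B⁻¹).mulVec g) = _
      rw [Matrix.sub_mulVec]; rfl
    have e3 : ((H⁻¹ - B⁻¹).mulVec g) = lam • (H⁻¹.mulVec (B⁻¹.mulVec g)) := by
      rw [hmat, Matrix.smul_mulVec, ← Matrix.mulVec_mulVec]
    rw [← e3, e2]
    abel
  have hnorm : ‖θs - ws‖ ≤ lam * ‖g‖ / μ ^ 2 := by
    rw [hdiff]
    have e1 : ((WithLp.equiv 2 (Fin n → ℝ)).symm (lam • H⁻¹.mulVec (B⁻¹.mulVec g)) : EuclideanSpace ℝ (Fin n))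
        = lam • ((WithLp.equiv 2 (Fin n → ℝ)).symm (H⁻¹.mulVec (B⁻¹.mulVec g)) : EuclideanSpace ℝ (Fin n)) := rfl
    rw [e1, norm_smul, Real.norm_eq_abs, abs_of_pos hlam]
    have b1 := inv_mulVec_norm_le H hHu μ hμ hmin
      ((WithLp.equiv 2 (Fin n → ℝ)).symm (B⁻¹.mulVec g))
    have b2 := inv_mulVec_norm_le B hBu μ hμ hBmin g
    have b3 : ‖((WithLp.equiv 2 (Fin n → ℝ)).symm (H⁻¹.mulVec (B⁻¹.mulVec g)) : EuclideanSpace ℝ (Fin n))‖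
        ≤ ‖g‖ / μ / μ := le_trans b1 (by gcongr)
    calc lam * ‖((WithLp.equiv 2 (Fin n → ℝ)).symm (H⁻¹.mulVec (B⁻¹.mulVec g)) : EuclideanSpace ℝ (Fin n))‖
        ≤ lam * (‖g‖ / μ / μ) := mul_le_mul_of_nonneg_left b3 hlam.le
      _ = lam * ‖g‖ / μ ^ 2 := by rw [div_div, ← sq, mul_div_assoc]
  calc ‖f θs x - f ws x‖ ≤ Lf * ‖θs - ws‖ := hlip x θs ws
    _ ≤ Lf * (lam * ‖g‖ / μ ^ 2) := mul_le_mul_of_nonneg_left hnorm hLf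
end

section
/- Let L be μ-strongly convex and differentiable on ℝⁿ with minimizer w*, and define θ*(λ) as the minimizer of L(θ) + (λ/2)‖θ − θ₀‖². Then ‖θ*(λ) − w*‖ ≤ (λ/μ)‖θ₀ − w*‖ for every λ > 0; in particular θ*(λ) → w* linearly in λ as λ → 0. -/
open scoped RealInnerProductSpace

lemma hasGradientAt_half_norm_sq {E : Type*} [NormedAddCommGroup E] [InnerProductSpace ℝ E]
    [CompleteSpace E] (c : ℝ) (θ₀ x : E) :
    HasGradientAt (fun θ => c / 2 * ‖θ - θ₀‖ ^ 2) (c • (x - θ₀)) x := by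
  have hid : HasFDerivAt (fun θ : E => θ - θ₀) (ContinuousLinearMap.id ℝ E) x :=
    (hasFDerivAt_id x).sub_const θ₀
  have h1 := (hid.inner ℝ hid).const_mul (c / 2)
  have heq : (fun θ : E => c / 2 * ⟪θ - θ₀, θ - θ₀⟫) = fun θ => c / 2 * ‖θ - θ₀‖ ^ 2 := by
    funext θ; rw [real_inner_self_eq_norm_sq]
  rw [heq] at h1
  rw [hasGradientAt_iff_hasFDerivAt]
  refine h1.congr_fderiv ?_
  ext v
  simp [fderivInnerCLM_apply, real_inner_smul_left, real_inner_comm (x - θ₀) v, inner_sub_left]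
  ring

lemma grad_eq_zero_of_isMinOn {E : Type*} [NormedAddCommGroup E] [InnerProductSpace ℝ E]
    [CompleteSpace E] {f : E → ℝ} {g a : E} (hf : HasGradientAt f g a)
    (h : IsMinOn f Set.univ a) : g = 0 := by
  have hz := (h.isLocalMin Filter.univ_mem).hasFDerivAt_eq_zero hf.hasFDerivAt
  have := congrArg (InnerProductSpace.toDual ℝ E).symm hz
  simpa using this

/-- if L is μ-strongly convex (monotone gradient inequality) with minimizer
w*, and θ*(λ) minimizes L(θ) + (λ/2)‖θ − θ₀‖², then
‖θ*(λ) − w*‖ ≤ (λ/μ)‖θ₀ − w*‖ for every λ > 0, so θ*(λ) → w* as λ → 0⁺. -/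
theorem famr_strongly_convex_approximation_bound
    {n : ℕ} (L : EuclideanSpace ℝ (Fin n) → ℝ)
    (gradL : EuclideanSpace ℝ (Fin n) → EuclideanSpace ℝ (Fin n))
    (hgrad : ∀ θ, HasGradientAt L (gradL θ) θ)
    (μ : ℝ) (hμ : 0 < μ)
    (hsc : ∀ a b : EuclideanSpace ℝ (Fin n),
      μ * ‖a - b‖ ^ 2 ≤ ⟪gradL a - gradL b, a - b⟫)
    (ws : EuclideanSpace ℝ (Fin n)) (hws : IsMinOn L Set.univ ws)
    (θ₀ : EuclideanSpace ℝ (Fin n))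
    (θstar : ℝ → EuclideanSpace ℝ (Fin n))
    (hθstar : ∀ lam : ℝ, 0 < lam →
      IsMinOn (fun θ => L θ + lam / 2 * ‖θ - θ₀‖ ^ 2) Set.univ (θstar lam)) :
    (∀ lam : ℝ, 0 < lam → ‖θstar lam - ws‖ ≤ lam / μ * ‖θ₀ - ws‖) ∧
    Filter.Tendsto θstar (nhdsWithin 0 (Set.Ioi 0)) (nhds ws) := by
  have hws0 : gradL ws = 0 := grad_eq_zero_of_isMinOn (hgrad ws) hws
  have key : ∀ lam : ℝ, 0 < lam → ‖θstar lam - ws‖ ≤ lam / μ * ‖θ₀ - ws‖ := by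
    intro lam hlam
    set p := θstar lam with hp
    -- gradient of anchored objective vanishes at p
    have hF : HasGradientAt (fun θ => L θ + lam / 2 * ‖θ - θ₀‖ ^ 2)
        (gradL p + lam • (p - θ₀)) p := by
      rw [hasGradientAt_iff_hasFDerivAt]
      have := ((hgrad p).hasFDerivAt.add (hasGradientAt_half_norm_sq lam θ₀ p).hasFDerivAt).congr_fderiv (map_add _ _ _).symm
      exact this
    have hFz : gradL p + lam • (p - θ₀) = 0 :=
      grad_eq_zero_of_isMinOn hF (hθstar lam hlam)
    have hgp : gradL p = lam • (θ₀ - p) := by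
      have : gradL p = -(lam • (p - θ₀)) := by linear_combination (norm := module) hFz
      rw [this]; module
    -- strong convexity inequality
    have h1 : μ * ‖p - ws‖ ^ 2 ≤ ⟪gradL p - gradL ws, p - ws⟫ := hsc p ws
    rw [hws0, sub_zero, hgp] at h1
    have h2 : ⟪lam • (θ₀ - p), p - ws⟫ = lam * ⟪θ₀ - ws, p - ws⟫ - lam * ‖p - ws‖ ^ 2 := by
      rw [real_inner_smul_left]
      have : (θ₀ : EuclideanSpace ℝ (Fin n)) - p = (θ₀ - ws) - (p - ws) := by module
      rw [this, inner_sub_left, real_inner_self_eq_norm_sq]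
      ring
    have h3 : ⟪θ₀ - ws, p - ws⟫ ≤ ‖θ₀ - ws‖ * ‖p - ws‖ := real_inner_le_norm _ _
    have h4 : μ * ‖p - ws‖ ^ 2 ≤ lam * (‖θ₀ - ws‖ * ‖p - ws‖) := by
      have hsq : (0:ℝ) ≤ lam * ‖p - ws‖ ^ 2 := by positivity
      nlinarith [h1, h2, h3]
    rcases eq_or_lt_of_le (norm_nonneg (p - ws)) with h0 | h0
    · rw [← h0]; positivity
    · rw [div_mul_eq_mul_div, le_div_iff₀ hμ]
      nlinarith [h4]
  refine ⟨key, ?_⟩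
  rw [tendsto_iff_norm_sub_tendsto_zero]
  have hb : Filter.Tendsto (fun lam : ℝ => lam / μ * ‖θ₀ - ws‖)
      (nhdsWithin 0 (Set.Ioi 0)) (nhds 0) := by
    have : Filter.Tendsto (fun lam : ℝ => lam / μ * ‖θ₀ - ws‖) (nhds 0) (nhds 0) := by
      have hc : Continuous (fun lam : ℝ => lam / μ * ‖θ₀ - ws‖) :=
        (continuous_id.div_const μ).mul continuous_const
      simpa using hc.tendsto 0
    exact this.mono_left nhdsWithin_le_nhds
  refine squeeze_zero' ?_ ?_ hb
  · filter_upwards with lam using norm_nonneg _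
  · filter_upwards [self_mem_nhdsWithin] with lam hlam using key lam hlam
end
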